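/- Let J ⊆ k[x₀,...,x_{d−1},y₀,...,y_{e−1}] be the monomial ideal generated by: x_{i+1}x_j for 0 ≤ i < j ≤ d−2; y_{i+1}y_j for 0 ≤ i < j ≤ e−2; x_j y_{i+1} for 0 ≤ i ≤ e−2, 0 ≤ j ≤ d−2; x_i y₀ for 0 ≤ i ≤ d−2; and y₀ y_i for 0 ≤ i ≤ e−2. Then the monomials not in J are exactly those of the forms x₀^a x_i x_{d−1}^b (0 ≤ i ≤ d−1), x_{d−1}^a y_i y_{e−1}^b (0 ≤ i ≤ e−1), together with 1. -/

import Mathlib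

open MvPolynomial

/-- The generators of the monomial ideal `J` (the `x`-variables are indexed by
`Sum.inl`, the `y`-variables by `Sum.inr`). -/
def wrcJGens (k : Type*) [Field k] (d e : ℕ) : Set (MvPolynomial (ℕ ⊕ ℕ) k) :=
  {p | ∃ i j : ℕ, i < j ∧ j ≤ d - 2 ∧ p = X (Sum.inl (i + 1)) * X (Sum.inl j)} ∪
  {p | ∃ i j : ℕ, i < j ∧ j ≤ e - 2 ∧ p = X (Sum.inr (i + 1)) * X (Sum.inr j)} ∪
  {p | ∃ i j : ℕ, i ≤ e - 2 ∧ j ≤ d - 2 ∧ p = X (Sum.inl j) * X (Sum.inr (i + 1))} ∪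
  {p | ∃ i : ℕ, i ≤ d - 2 ∧ p = X (Sum.inl i) * X (Sum.inr 0)} ∪
  {p | ∃ i : ℕ, i ≤ e - 2 ∧ p = X (Sum.inr 0) * X (Sum.inr i)}

/-- Exponent vectors of the generators of `J`. -/
def wrcT (d e : ℕ) : Set ((ℕ ⊕ ℕ) →₀ ℕ) :=
  {s | ∃ i j : ℕ, i < j ∧ j ≤ d - 2 ∧
      s = Finsupp.single (Sum.inl (i + 1)) 1 + Finsupp.single (Sum.inl j) 1} ∪
  {s | ∃ i j : ℕ, i < j ∧ j ≤ e - 2 ∧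
      s = Finsupp.single (Sum.inr (i + 1)) 1 + Finsupp.single (Sum.inr j) 1} ∪
  {s | ∃ i j : ℕ, i ≤ e - 2 ∧ j ≤ d - 2 ∧
      s = Finsupp.single (Sum.inl j) 1 + Finsupp.single (Sum.inr (i + 1)) 1} ∪
  {s | ∃ i : ℕ, i ≤ d - 2 ∧
      s = Finsupp.single (Sum.inl i) 1 + Finsupp.single (Sum.inr 0) 1} ∪
  {s | ∃ i : ℕ, i ≤ e - 2 ∧
      s = Finsupp.single (Sum.inr 0) 1 + Finsupp.single (Sum.inr i) 1}

lemma wrcX_mul_X (k : Type*) [Field k] (u v : ℕ ⊕ ℕ) :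
    (X u * X v : MvPolynomial (ℕ ⊕ ℕ) k) =
      monomial (Finsupp.single u 1 + Finsupp.single v 1) 1 := by
  rw [← pow_one (X u), ← pow_one (X v), X_pow_eq_monomial, X_pow_eq_monomial,
    monomial_mul, one_mul]

lemma wrcJGens_eq (k : Type*) [Field k] (d e : ℕ) :
    wrcJGens k d e = (fun s => monomial s (1 : k)) '' wrcT d e := by
  ext p
  simp only [wrcJGens, wrcT, Set.mem_union, Set.mem_setOf_eq, Set.mem_image]
  constructor
  · rintro ((((⟨i, j, h1, h2, rfl⟩ | ⟨i, j, h1, h2, rfl⟩) | ⟨i, j, h1, h2, rfl⟩) |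
      ⟨i, h1, rfl⟩) | ⟨i, h1, rfl⟩)
    · exact ⟨_, Or.inl (Or.inl (Or.inl (Or.inl ⟨i, j, h1, h2, rfl⟩))), (wrcX_mul_X k _ _).symm⟩
    · exact ⟨_, Or.inl (Or.inl (Or.inl (Or.inr ⟨i, j, h1, h2, rfl⟩))), (wrcX_mul_X k _ _).symm⟩
    · exact ⟨_, Or.inl (Or.inl (Or.inr ⟨i, j, h1, h2, rfl⟩)), (wrcX_mul_X k _ _).symm⟩
    · exact ⟨_, Or.inl (Or.inr ⟨i, h1, rfl⟩), (wrcX_mul_X k _ _).symm⟩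
    · exact ⟨_, Or.inr ⟨i, h1, rfl⟩, (wrcX_mul_X k _ _).symm⟩
  · rintro ⟨s, ((((⟨i, j, h1, h2, rfl⟩ | ⟨i, j, h1, h2, rfl⟩) | ⟨i, j, h1, h2, rfl⟩) |
      ⟨i, h1, rfl⟩) | ⟨i, h1, rfl⟩), rfl⟩
    · exact Or.inl (Or.inl (Or.inl (Or.inl ⟨i, j, h1, h2, (wrcX_mul_X k _ _).symm⟩)))
    · exact Or.inl (Or.inl (Or.inl (Or.inr ⟨i, j, h1, h2, (wrcX_mul_X k _ _).symm⟩)))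
    · exact Or.inl (Or.inl (Or.inr ⟨i, j, h1, h2, (wrcX_mul_X k _ _).symm⟩))
    · exact Or.inl (Or.inr ⟨i, h1, (wrcX_mul_X k _ _).symm⟩)
    · exact Or.inr ⟨i, h1, (wrcX_mul_X k _ _).symm⟩

lemma wrc_mem_iff (k : Type*) [Field k] (d e : ℕ) (m : (ℕ ⊕ ℕ) →₀ ℕ) :
    (monomial m (1 : k)) ∈ Ideal.span (wrcJGens k d e) ↔ ∃ s ∈ wrcT d e, s ≤ m := by
  rw [wrcJGens_eq, mem_ideal_span_monomial_image]
  simp [support_monomial]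
lemma wrc_pair_le {u v : ℕ ⊕ ℕ} {m : (ℕ ⊕ ℕ) →₀ ℕ} (huv : u ≠ v)
    (hu : 1 ≤ m u) (hv : 1 ≤ m v) :
    Finsupp.single u 1 + Finsupp.single v 1 ≤ m := by
  rw [Finsupp.le_def]
  intro w
  by_cases h1 : u = w
  · subst h1
    simp only [Finsupp.coe_add, Pi.add_apply, Finsupp.single_eq_same,
      Finsupp.single_eq_of_ne' (Ne.symm huv)]
    omega
  · by_cases h2 : v = w
    · subst h2
      simp only [Finsupp.coe_add, Pi.add_apply, Finsupp.single_eq_same,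
        Finsupp.single_eq_of_ne' huv]
      omega
    · simp [Finsupp.single_apply, h1, h2]

lemma wrc_pair_le' {u : ℕ ⊕ ℕ} {m : (ℕ ⊕ ℕ) →₀ ℕ} (hu : 2 ≤ m u) :
    Finsupp.single u 1 + Finsupp.single u 1 ≤ m := by
  rw [Finsupp.le_def]
  intro w
  by_cases h : u = w
  · subst h
    simp only [Finsupp.coe_add, Pi.add_apply, Finsupp.single_eq_same]
    omega
  · simp [Finsupp.single_apply, h]

lemma wrc_ge (p q : ℕ ⊕ ℕ) {m : (ℕ ⊕ ℕ) →₀ ℕ}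
    (h : Finsupp.single p 1 + Finsupp.single q 1 ≤ m) :
    1 ≤ m p ∧ 1 ≤ m q ∧ (p = q → 2 ≤ m p) := by
  have hp := Finsupp.le_def.mp h p
  have hq := Finsupp.le_def.mp h q
  rcases eq_or_ne p q with rfl | hpq
  · simp only [Finsupp.coe_add, Pi.add_apply, Finsupp.single_eq_same] at hp
    exact ⟨by omega, by omega, fun _ => by omega⟩
  · simp only [Finsupp.coe_add, Pi.add_apply, Finsupp.single_eq_same,
      Finsupp.single_eq_of_ne hpq, Finsupp.single_eq_of_ne (Ne.symm hpq)] at hp hq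
    exact ⟨by omega, by omega, fun h => absurd h hpq⟩

lemma wrc_memT1 {d e s t : ℕ} (hs : 1 ≤ s) (hst : s ≤ t) (ht : t ≤ d - 2) :
    Finsupp.single (Sum.inl s) 1 + Finsupp.single (Sum.inl t) 1 ∈ wrcT d e := by
  simp only [wrcT, Set.mem_union, Set.mem_setOf_eq]
  refine Or.inl (Or.inl (Or.inl (Or.inl ⟨s - 1, t, by omega, ht, ?_⟩)))
  rw [Nat.sub_add_cancel hs]

lemma wrc_memT2 {d e s t : ℕ} (hs : 1 ≤ s) (hst : s ≤ t) (ht : t ≤ e - 2) :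
    Finsupp.single (Sum.inr s) 1 + Finsupp.single (Sum.inr t) 1 ∈ wrcT d e := by
  simp only [wrcT, Set.mem_union, Set.mem_setOf_eq]
  refine Or.inl (Or.inl (Or.inl (Or.inr ⟨s - 1, t, by omega, ht, ?_⟩)))
  rw [Nat.sub_add_cancel hs]

lemma wrc_memT3 {d e s j : ℕ} (hj : j ≤ d - 2) (hs : 1 ≤ s) (hse : s - 1 ≤ e - 2) :
    Finsupp.single (Sum.inl j) 1 + Finsupp.single (Sum.inr s) 1 ∈ wrcT d e := by
  simp only [wrcT, Set.mem_union, Set.mem_setOf_eq]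
  refine Or.inl (Or.inl (Or.inr ⟨s - 1, j, hse, hj, ?_⟩))
  rw [Nat.sub_add_cancel hs]

lemma wrc_memT4 {d e j : ℕ} (hj : j ≤ d - 2) :
    Finsupp.single (Sum.inl j) 1 + Finsupp.single (Sum.inr 0) 1 ∈ wrcT d e := by
  simp only [wrcT, Set.mem_union, Set.mem_setOf_eq]
  exact Or.inl (Or.inr ⟨j, hj, rfl⟩)

lemma wrc_memT5 {d e i : ℕ} (hi : i ≤ e - 2) :
    Finsupp.single (Sum.inr 0) 1 + Finsupp.single (Sum.inr i) 1 ∈ wrcT d e := by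
  simp only [wrcT, Set.mem_union, Set.mem_setOf_eq]
  exact Or.inr ⟨i, hi, rfl⟩

/-- The combinatorial condition equivalent to a monomial not lying in `J`. -/
def wrcGood (d e : ℕ) (m : (ℕ ⊕ ℕ) →₀ ℕ) : Prop :=
  (∀ s t : ℕ, 1 ≤ s → s < t → t ≤ d - 2 → m (Sum.inl s) = 0 ∨ m (Sum.inl t) = 0) ∧
  (∀ t : ℕ, 1 ≤ t → t ≤ d - 2 → m (Sum.inl t) ≤ 1) ∧
  (∀ s t : ℕ, 1 ≤ s → s < t → t ≤ e - 2 → m (Sum.inr s) = 0 ∨ m (Sum.inr t) = 0) ∧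
  (∀ t : ℕ, 1 ≤ t → t ≤ e - 2 → m (Sum.inr t) ≤ 1) ∧
  (∀ j s : ℕ, j ≤ d - 2 → 1 ≤ s → s ≤ e - 1 → m (Sum.inl j) = 0 ∨ m (Sum.inr s) = 0) ∧
  (∀ j : ℕ, j ≤ d - 2 → m (Sum.inl j) = 0 ∨ m (Sum.inr 0) = 0) ∧
  (∀ t : ℕ, 1 ≤ t → t ≤ e - 2 → m (Sum.inr 0) = 0 ∨ m (Sum.inr t) = 0) ∧
  m (Sum.inr 0) ≤ 1

lemma wrc_good_iff (d e : ℕ) (hd : 2 ≤ d) (he : 2 ≤ e) (m : (ℕ ⊕ ℕ) →₀ ℕ) :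
    (¬ ∃ s ∈ wrcT d e, s ≤ m) ↔ wrcGood d e m := by
  constructor
  · intro hJ
    refine ⟨?_, ?_, ?_, ?_, ?_, ?_, ?_, ?_⟩
    · intro s t hs hst ht
      by_contra hc
      push_neg at hc
      exact hJ ⟨_, wrc_memT1 hs (by omega) ht,
        wrc_pair_le (by simp; omega) (by omega) (by omega)⟩
    · intro t ht1 ht2
      by_contra hc
      push_neg at hc
      exact hJ ⟨_, wrc_memT1 ht1 le_rfl ht2, wrc_pair_le' (by omega)⟩
    · intro s t hs hst ht
      by_contra hc
      push_neg at hc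
      exact hJ ⟨_, wrc_memT2 hs (by omega) ht,
        wrc_pair_le (by simp; omega) (by omega) (by omega)⟩
    · intro t ht1 ht2
      by_contra hc
      push_neg at hc
      exact hJ ⟨_, wrc_memT2 ht1 le_rfl ht2, wrc_pair_le' (by omega)⟩
    · intro j s hj hs1 hs2
      by_contra hc
      push_neg at hc
      exact hJ ⟨_, wrc_memT3 hj hs1 (by omega),
        wrc_pair_le (by simp) (by omega) (by omega)⟩
    · intro j hj
      by_contra hc
      push_neg at hc
      exact hJ ⟨_, wrc_memT4 hj, wrc_pair_le (by simp) (by omega) (by omega)⟩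
    · intro t ht1 ht2
      by_contra hc
      push_neg at hc
      exact hJ ⟨_, wrc_memT5 ht2, wrc_pair_le (by simp; omega) (by omega) (by omega)⟩
    · by_contra hc
      push_neg at hc
      exact hJ ⟨_, wrc_memT5 (i := 0) (by omega), wrc_pair_le' (by omega)⟩
  · rintro ⟨g1, g2, g3, g4, g5, g6, g7, g8⟩ ⟨s, hsT, hle⟩
    simp only [wrcT, Set.mem_union, Set.mem_setOf_eq] at hsT
    rcases hsT with ((((⟨i, j, hij, hjd, rfl⟩ | ⟨i, j, hij, hje, rfl⟩) |
      ⟨i, j, hie, hjd, rfl⟩) | ⟨i, hid, rfl⟩) | ⟨i, hie, rfl⟩)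
    · obtain ⟨e1, e2, e3⟩ := wrc_ge _ _ hle
      rcases eq_or_ne (i + 1) j with h | h
      · have h4 := e3 (by rw [h])
        have h5 := g2 j (by omega) hjd
        rw [h] at h4
        omega
      · rcases g1 (i + 1) j (by omega) (by omega) hjd with h0 | h0 <;> omega
    · obtain ⟨e1, e2, e3⟩ := wrc_ge _ _ hle
      rcases eq_or_ne (i + 1) j with h | h
      · have h4 := e3 (by rw [h])
        have h5 := g4 j (by omega) hje
        rw [h] at h4
        omega
      · rcases g3 (i + 1) j (by omega) (by omega) hje with h0 | h0 <;> omega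
    · obtain ⟨e1, e2, _⟩ := wrc_ge _ _ hle
      rcases g5 j (i + 1) hjd (by omega) (by omega) with h0 | h0 <;> omega
    · obtain ⟨e1, e2, _⟩ := wrc_ge _ _ hle
      rcases g6 i hid with h0 | h0 <;> omega
    · obtain ⟨e1, e2, e3⟩ := wrc_ge _ _ hle
      rcases eq_or_ne i 0 with rfl | h
      · have h4 := e3 rfl
        omega
      · rcases g7 i (by omega) hie with h0 | h0 <;> omega
lemma wrc_mono_eq (k : Type*) [Field k] (u i v : ℕ ⊕ ℕ) (a b : ℕ) (m : (ℕ ⊕ ℕ) →₀ ℕ)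
    (hm : m = Finsupp.single u a + Finsupp.single i 1 + Finsupp.single v b) :
    (monomial m (1 : k)) = X u ^ a * X i * X v ^ b := by
  subst hm
  rw [X_pow_eq_monomial, X_pow_eq_monomial, ← pow_one (X i), X_pow_eq_monomial,
    monomial_mul, monomial_mul, one_mul, one_mul]
theorem stmt11 (k : Type*) [Field k] (d e : ℕ) (hd : 2 ≤ d) (he : 2 ≤ e)
    (m : (ℕ ⊕ ℕ) →₀ ℕ)
    (hmx : ∀ i : ℕ, m (Sum.inl i) ≠ 0 → i < d)
    (hmy : ∀ i : ℕ, m (Sum.inr i) ≠ 0 → i < e) :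
    (monomial m (1 : k)) ∉ Ideal.span (wrcJGens k d e) ↔
      ((∃ a b : ℕ, ∃ i < d, (monomial m (1 : k)) =
          X (Sum.inl 0) ^ a * X (Sum.inl i) * X (Sum.inl (d - 1)) ^ b) ∨
       (∃ a b : ℕ, ∃ i < e, (monomial m (1 : k)) =
          X (Sum.inl (d - 1)) ^ a * X (Sum.inr i) * X (Sum.inr (e - 1)) ^ b) ∨
       (monomial m (1 : k)) = 1) := by
  rw [show ((monomial m (1 : k)) ∉ Ideal.span (wrcJGens k d e)) =
      ¬ ∃ s ∈ wrcT d e, s ≤ m from by rw [wrc_mem_iff], wrc_good_iff d e hd he m]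
  constructor
  · rintro ⟨g1, g2, g3, g4, g5, g6, g7, g8⟩
    have hxd : ∀ j, d ≤ j → m (Sum.inl j) = 0 := by
      intro j hj
      by_contra hcon
      exact absurd (hmx j hcon) (by omega)
    have hye : ∀ t, e ≤ t → m (Sum.inr t) = 0 := by
      intro t ht
      by_contra hcon
      exact absurd (hmy t hcon) (by omega)
    by_cases hy : ∀ s, m (Sum.inr s) = 0
    · by_cases hmid : ∃ t, 1 ≤ t ∧ t ≤ d - 2 ∧ m (Sum.inl t) ≠ 0
      · obtain ⟨t, ht1, ht2, ht3⟩ := hmid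
        have hone : m (Sum.inl t) = 1 := by have := g2 t ht1 ht2; omega
        refine Or.inl ⟨m (Sum.inl 0), m (Sum.inl (d - 1)), t, by omega,
          wrc_mono_eq k _ _ _ _ _ _ ?_⟩
        ext w
        rcases w with j | t'
        · rcases eq_or_ne j 0 with rfl | hj0
          · simp [Finsupp.add_apply, Finsupp.single_apply,
              show t ≠ 0 by omega, show d - 1 ≠ 0 by omega]
          · rcases eq_or_ne j t with rfl | hjt
            · simp [Finsupp.add_apply, Finsupp.single_apply, hone,
                show (0 : ℕ) ≠ j by omega, show d - 1 ≠ j by omega]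
            · rcases eq_or_ne j (d - 1) with rfl | hjd
              · simp [Finsupp.add_apply, Finsupp.single_apply,
                  show (0 : ℕ) ≠ d - 1 by omega, show t ≠ d - 1 by omega]
              · have hz : m (Sum.inl j) = 0 := by
                  rcases lt_or_ge j d with h | h
                  · rcases lt_or_ge j t with h2 | h2
                    · exact (g1 j t (by omega) h2 ht2).resolve_right ht3
                    · exact (g1 t j ht1 (by omega) (by omega)).resolve_left ht3
                  · exact hxd j h
                simp [Finsupp.add_apply, Finsupp.single_apply, hz,
                  Ne.symm hj0, Ne.symm hjt, Ne.symm hjd]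
        · simp [Finsupp.add_apply, Finsupp.single_apply, hy t']
      · push_neg at hmid
        by_cases h0 : m (Sum.inl 0) ≠ 0
        · refine Or.inl ⟨m (Sum.inl 0) - 1, m (Sum.inl (d - 1)), 0, by omega,
            wrc_mono_eq k _ _ _ _ _ _ ?_⟩
          ext w
          rcases w with j | t'
          · rcases eq_or_ne j 0 with rfl | hj0
            · simp [Finsupp.add_apply, Finsupp.single_apply, show d - 1 ≠ 0 by omega]
              omega
            · rcases eq_or_ne j (d - 1) with rfl | hjd
              · simp [Finsupp.add_apply, Finsupp.single_apply,
                  show (0 : ℕ) ≠ d - 1 by omega]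
              · have hz : m (Sum.inl j) = 0 := by
                  rcases lt_or_ge j d with h | h
                  · exact hmid j (by omega) (by omega)
                  · exact hxd j h
                simp [Finsupp.add_apply, Finsupp.single_apply, hz,
                  Ne.symm hj0, Ne.symm hjd]
          · simp [Finsupp.add_apply, Finsupp.single_apply, hy t']
        · push_neg at h0
          by_cases hD : m (Sum.inl (d - 1)) ≠ 0
          · refine Or.inl ⟨0, m (Sum.inl (d - 1)) - 1, d - 1, by omega,
              wrc_mono_eq k _ _ _ _ _ _ ?_⟩
            ext w
            rcases w with j | t'
            · rcases eq_or_ne j (d - 1) with rfl | hjd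
              · simp [Finsupp.add_apply, Finsupp.single_apply]
                omega
              · have hz : m (Sum.inl j) = 0 := by
                  rcases lt_or_ge j d with h | h
                  · rcases eq_or_ne j 0 with rfl | hj0
                    · exact h0
                    · exact hmid j (by omega) (by omega)
                  · exact hxd j h
                simp [Finsupp.add_apply, Finsupp.single_apply, hz, Ne.symm hjd]
            · simp [Finsupp.add_apply, Finsupp.single_apply, hy t']
          · push_neg at hD
            refine Or.inr (Or.inr ?_)
            have hm0 : m = 0 := by
              ext w
              simp only [Finsupp.coe_zero, Pi.zero_apply]
              rcases w with j | t'
              · rcases lt_or_ge j d with h | h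
                · rcases eq_or_ne j 0 with rfl | hj0
                  · exact h0
                  · rcases eq_or_ne j (d - 1) with rfl | hjd
                    · exact hD
                    · exact hmid j (by omega) (by omega)
                · exact hxd j h
              · exact hy t'
            rw [hm0, monomial_zero', C_1]
    · push_neg at hy
      obtain ⟨s0, hs0⟩ := hy
      have hs0e : s0 < e := hmy s0 hs0
      have hxsmall : ∀ j, j ≤ d - 2 → m (Sum.inl j) = 0 := by
        intro j hj
        rcases eq_or_ne s0 0 with rfl | hs0n
        · exact (g6 j hj).resolve_right hs0
        · exact (g5 j s0 hj (by omega) (by omega)).resolve_right hs0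
      have hxz : ∀ j, j ≠ d - 1 → m (Sum.inl j) = 0 := by
        intro j hj
        rcases lt_or_ge j d with h | h
        · exact hxsmall j (by omega)
        · exact hxd j h
      by_cases hy0 : m (Sum.inr 0) ≠ 0
      · have hy0' : m (Sum.inr 0) = 1 := by omega
        refine Or.inr (Or.inl ⟨m (Sum.inl (d - 1)), m (Sum.inr (e - 1)), 0, by omega,
          wrc_mono_eq k _ _ _ _ _ _ ?_⟩)
        ext w
        rcases w with j | t
        · rcases eq_or_ne j (d - 1) with rfl | hjd
          · simp [Finsupp.add_apply, Finsupp.single_apply]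
          · simp [Finsupp.add_apply, Finsupp.single_apply, hxz j hjd, Ne.symm hjd]
        · rcases eq_or_ne t 0 with rfl | ht0
          · simp [Finsupp.add_apply, Finsupp.single_apply, hy0',
              show e - 1 ≠ 0 by omega]
          · rcases eq_or_ne t (e - 1) with rfl | hte
            · simp [Finsupp.add_apply, Finsupp.single_apply,
                show (0 : ℕ) ≠ e - 1 by omega]
            · have hz : m (Sum.inr t) = 0 := by
                rcases lt_or_ge t e with h | h
                · exact (g7 t (by omega) (by omega)).resolve_left hy0
                · exact hye t h
              simp [Finsupp.add_apply, Finsupp.single_apply, hz,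
                Ne.symm ht0, Ne.symm hte]
      · push_neg at hy0
        by_cases hmidy : ∃ t, 1 ≤ t ∧ t ≤ e - 2 ∧ m (Sum.inr t) ≠ 0
        · obtain ⟨t0, ht1, ht2, ht3⟩ := hmidy
          have hone : m (Sum.inr t0) = 1 := by have := g4 t0 ht1 ht2; omega
          refine Or.inr (Or.inl ⟨m (Sum.inl (d - 1)), m (Sum.inr (e - 1)), t0, by omega,
            wrc_mono_eq k _ _ _ _ _ _ ?_⟩)
          ext w
          rcases w with j | t
          · rcases eq_or_ne j (d - 1) with rfl | hjd
            · simp [Finsupp.add_apply, Finsupp.single_apply]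
            · simp [Finsupp.add_apply, Finsupp.single_apply, hxz j hjd, Ne.symm hjd]
          · rcases eq_or_ne t (e - 1) with rfl | hte
            · simp [Finsupp.add_apply, Finsupp.single_apply,
                show t0 ≠ e - 1 by omega]
            · rcases eq_or_ne t t0 with rfl | htt
              · simp [Finsupp.add_apply, Finsupp.single_apply, hone,
                  show e - 1 ≠ t by omega]
              · have hz : m (Sum.inr t) = 0 := by
                  rcases lt_or_ge t e with h | h
                  · rcases eq_or_ne t 0 with rfl | ht0'
                    · exact hy0
                    · rcases lt_or_ge t t0 with h2 | h2
                      · exact (g3 t t0 (by omega) h2 ht2).resolve_right ht3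
                      · exact (g3 t0 t ht1 (by omega) (by omega)).resolve_left ht3
                  · exact hye t h
                simp [Finsupp.add_apply, Finsupp.single_apply, hz,
                  Ne.symm hte, Ne.symm htt]
        · push_neg at hmidy
          have hse : s0 = e - 1 := by
            by_contra hne
            rcases eq_or_ne s0 0 with rfl | h1
            · exact hs0 hy0
            · exact hs0 (hmidy s0 (by omega) (by omega))
          have hEnz : m (Sum.inr (e - 1)) ≠ 0 := hse ▸ hs0
          refine Or.inr (Or.inl ⟨m (Sum.inl (d - 1)), m (Sum.inr (e - 1)) - 1, e - 1,
            by omega, wrc_mono_eq k _ _ _ _ _ _ ?_⟩)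
          ext w
          rcases w with j | t
          · rcases eq_or_ne j (d - 1) with rfl | hjd
            · simp [Finsupp.add_apply, Finsupp.single_apply]
            · simp [Finsupp.add_apply, Finsupp.single_apply, hxz j hjd, Ne.symm hjd]
          · rcases eq_or_ne t (e - 1) with rfl | hte
            · simp [Finsupp.add_apply, Finsupp.single_apply]
              omega
            · have hz : m (Sum.inr t) = 0 := by
                rcases lt_or_ge t e with h | h
                · rcases eq_or_ne t 0 with rfl | ht0'
                  · exact hy0
                  · exact hmidy t (by omega) (by omega)
                · exact hye t h
              simp [Finsupp.add_apply, Finsupp.single_apply, hz, Ne.symm hte]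
  · rintro (⟨a, b, i, hi, heq⟩ | ⟨a, b, i, hi, heq⟩ | heq)
    · have hm : m = Finsupp.single (Sum.inl 0) a + Finsupp.single (Sum.inl i) 1 +
          Finsupp.single (Sum.inl (d - 1)) b :=
        monomial_left_injective (one_ne_zero (α := k))
          (heq.trans (wrc_mono_eq k _ _ _ a b _ rfl).symm)
      have hl : ∀ j : ℕ, m (Sum.inl j) =
          (if 0 = j then a else 0) + (if i = j then 1 else 0) +
            (if d - 1 = j then b else 0) := by
        intro j
        rw [hm, Finsupp.add_apply, Finsupp.add_apply, Finsupp.single_apply,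
          Finsupp.single_apply, Finsupp.single_apply]
        simp only [Sum.inl.injEq]
      have hr : ∀ t : ℕ, m (Sum.inr t) = 0 := by
        intro t
        rw [hm, Finsupp.add_apply, Finsupp.add_apply, Finsupp.single_apply,
          Finsupp.single_apply, Finsupp.single_apply]
        simp
      refine ⟨?_, ?_, ?_, ?_, ?_, ?_, ?_, ?_⟩
      · intro s t hs hst ht
        simp only [hl]
        split_ifs <;> omega
      · intro t ht1 ht2
        simp only [hl]
        split_ifs <;> omega
      · intro s t hs hst ht
        exact Or.inl (hr s)
      · intro t _ _
        simp [hr]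
      · intro j s _ _ _
        exact Or.inr (hr s)
      · intro j _
        exact Or.inr (hr 0)
      · intro t _ _
        exact Or.inl (hr 0)
      · simp [hr]
    · have hm : m = Finsupp.single (Sum.inl (d - 1)) a + Finsupp.single (Sum.inr i) 1 +
          Finsupp.single (Sum.inr (e - 1)) b :=
        monomial_left_injective (one_ne_zero (α := k))
          (heq.trans (wrc_mono_eq k _ _ _ a b _ rfl).symm)
      have hl : ∀ j : ℕ, m (Sum.inl j) = (if d - 1 = j then a else 0) := by
        intro j
        rw [hm, Finsupp.add_apply, Finsupp.add_apply, Finsupp.single_apply,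
          Finsupp.single_apply, Finsupp.single_apply]
        simp
      have hr : ∀ t : ℕ, m (Sum.inr t) =
          (if i = t then 1 else 0) + (if e - 1 = t then b else 0) := by
        intro t
        rw [hm, Finsupp.add_apply, Finsupp.add_apply, Finsupp.single_apply,
          Finsupp.single_apply, Finsupp.single_apply]
        simp
      refine ⟨?_, ?_, ?_, ?_, ?_, ?_, ?_, ?_⟩
      · intro s t hs hst ht
        simp only [hl]
        split_ifs <;> omega
      · intro t ht1 ht2
        simp only [hl]
        split_ifs <;> omega
      · intro s t hs hst ht
        simp only [hr]
        split_ifs <;> omega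
      · intro t ht1 ht2
        simp only [hr]
        split_ifs <;> omega
      · intro j s hj hs1 hs2
        simp only [hl, hr]
        split_ifs <;> omega
      · intro j hj
        simp only [hl, hr]
        split_ifs <;> omega
      · intro t ht1 ht2
        simp only [hr]
        split_ifs <;> omega
      · simp only [hr]
        split_ifs <;> omega
    · have h1 : (monomial (0 : (ℕ ⊕ ℕ) →₀ ℕ) (1 : k)) = 1 := by simp
      have hm : m = 0 :=
        monomial_left_injective (one_ne_zero (α := k)) (heq.trans h1.symm)
      have hz : ∀ w, m w = 0 := by
        intro w
        rw [hm]
        rfl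
      exact ⟨fun s t _ _ _ => Or.inl (hz _), fun t _ _ => by simp [hz],
        fun s t _ _ _ => Or.inl (hz _), fun t _ _ => by simp [hz],
        fun j s _ _ _ => Or.inl (hz _), fun j _ => Or.inl (hz _),
        fun t _ _ => Or.inl (hz _), by simp [hz]⟩
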